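/- With distinct nonzero x_j, weights w_j = q_r(x_j)/p_r'(x_j), V the n_x \times n_x Vandermonde matrix V_{ij} = x_j^{i-1}, W = diag(w_1,...,w_{n_x}), X = diag(x_1,...,x_{n_x}), and R the reversal (anti-identity) matrix, the Hankel matrices A_1 and A_0 built from the a_k sequence satisfy A_1 R = V W V^T and A_0 R = V W X V^T. -/

import Mathlib

open Finset Polynomial

/-- Factorization of the Hankel matrices: with distinct nonzero `x_j`, weights
`w_j = q_r(x_j)/p_r'(x_j)`, the Vandermonde matrix `V_{ij} = x_j^{i-1}`,
`W = diag(w)`, `X = diag(x)` and `R` the reversal matrix, the matrices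
`(A_1)_{ij} = a_{n_y+i-j}` and `(A_0)_{ij} = a_{n_y+1+i-j}` satisfy
`A_1 R = V W Vᵀ` and `A_0 R = V W X Vᵀ`. -/
lemma key_lemma (nx ny : ℕ) (hnx : 0 < nx) (x : Fin nx → ℝ) (y : Fin ny → ℝ)
    (hxdist : Function.Injective x) (hx0 : ∀ j, x j ≠ 0)
    (a : ℤ → ℝ) (haneg : ∀ n : ℤ, n < 0 → a n = 0)
    (ha : ∀ n : ℕ, a n = PowerSeries.coeff n
      (((∏ i, (1 - C (y i) * X) : ℝ[X]) : PowerSeries ℝ) *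
        ((∏ j, (1 - C (x j) * X) : ℝ[X]) : PowerSeries ℝ)⁻¹))
    (w : Fin nx → ℝ)
    (hw : ∀ j, w j = (∏ i, (X - C (y i)) : ℝ[X]).eval (x j) /
        (derivative (∏ j', (X - C (x j')) : ℝ[X])).eval (x j))
    (m : ℕ) : a ((ny : ℤ) + 1 - nx + m) = ∑ k, w k * x k ^ m := by
  obtain ⟨d, e, hde, hde2⟩ : ∃ d e : ℕ, d + (ny+1) = e + nx ∧ (ny:ℤ)+1-nx = (e:ℤ) - d :=
    ⟨nx-(ny+1), (ny+1)-nx, by omega, by omega⟩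
  set p : ℝ[X] := ∏ j, (1 - C (x j) * X) with hp
  set q : ℝ[X] := ∏ i, (1 - C (y i) * X) with hq
  set G : ℝ[X] := ∑ k, C (w k) * ∏ j ∈ univ.erase k, (1 - C (x j) * X) with hG
  set F : ℝ[X] := X^d * q - X^e * G with hF
  -- derivative of nodal at node
  have hnodal : ∀ k, (derivative (∏ j', (X - C (x j')) : ℝ[X])).eval (x k)
      = ∏ j ∈ univ.erase k, (x k - x j) := by
    intro k
    have h := Lagrange.eval_nodal_derivative_eval_node_eq (s := univ) (v := x) (mem_univ k)
    rw [Lagrange.nodal] at h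
    rw [h, Lagrange.eval_nodal]
  have hPxx : ∀ k : Fin nx, (∏ j ∈ univ.erase k, (x k - x j)) ≠ 0 := by
    intro k
    refine prod_ne_zero_iff.mpr fun j hj => sub_ne_zero.mpr fun hh => ?_
    exact (mem_erase.mp hj).1 (hxdist hh).symm
  -- roots of F
  have hroot : ∀ k, F.eval (x k)⁻¹ = 0 := by
    intro k
    have hc := hx0 k
    have hone : (1 : ℝ) - x k * (x k)⁻¹ = 0 := by rw [mul_inv_cancel₀ hc, sub_self]
    have hsum : ∑ k', w k' * ∏ j ∈ univ.erase k', (1 - x j * (x k)⁻¹)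
        = w k * ∏ j ∈ univ.erase k, (1 - x j * (x k)⁻¹) := by
      refine Finset.sum_eq_single k (fun k' _ hk' => ?_) (fun h => absurd (mem_univ k) h)
      rw [Finset.prod_eq_zero (mem_erase.mpr ⟨Ne.symm hk', mem_univ k⟩) hone, mul_zero]
    have h1 : ∏ i, (1 - y i * (x k)⁻¹) = (∏ i, (x k - y i)) * ((x k)⁻¹)^ny := by
      calc ∏ i, (1 - y i * (x k)⁻¹) = ∏ i, ((x k - y i) * (x k)⁻¹) :=
            Finset.prod_congr rfl fun i _ => by rw [sub_mul, mul_inv_cancel₀ hc]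
        _ = (∏ i, (x k - y i)) * (x k)⁻¹ ^ ny := by
            rw [prod_mul_distrib, prod_const, card_univ, Fintype.card_fin]
    have h2 : ∏ j ∈ univ.erase k, (1 - x j * (x k)⁻¹)
        = (∏ j ∈ univ.erase k, (x k - x j)) * ((x k)⁻¹)^(nx-1) := by
      calc ∏ j ∈ univ.erase k, (1 - x j * (x k)⁻¹)
          = ∏ j ∈ univ.erase k, ((x k - x j) * (x k)⁻¹) :=
            Finset.prod_congr rfl fun j _ => by rw [sub_mul, mul_inv_cancel₀ hc]
        _ = (∏ j ∈ univ.erase k, (x k - x j)) * (x k)⁻¹ ^ (nx-1) := by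
            rw [prod_mul_distrib, prod_const, card_erase_of_mem (mem_univ k), card_univ,
              Fintype.card_fin]
    simp only [hF, hq, hG, eval_sub, eval_mul, eval_pow, eval_X, eval_prod, eval_finset_sum,
      eval_one, eval_C, hsum, h1, h2, hw k, hnodal k]
    have hcancel : (∏ i, (x k - y i)) / (∏ j ∈ univ.erase k, (x k - x j))
        * ((∏ j ∈ univ.erase k, (x k - x j)) * (x k)⁻¹ ^ (nx-1))
        = (∏ i, (x k - y i)) * (x k)⁻¹ ^ (nx-1) := by
      field_simp
      exact mul_div_cancel_right₀ _ (hPxx k)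
    rw [hcancel]
    have hkey : (x k)⁻¹ ^ d * ((∏ i, (x k - y i)) * (x k)⁻¹ ^ ny)
        = (x k)⁻¹ ^ e * ((∏ i, (x k - y i)) * (x k)⁻¹ ^ (nx-1)) := by
      calc (x k)⁻¹ ^ d * ((∏ i, (x k - y i)) * (x k)⁻¹ ^ ny)
          = (∏ i, (x k - y i)) * (x k)⁻¹ ^ (d + ny) := by rw [pow_add]; ring
        _ = (∏ i, (x k - y i)) * (x k)⁻¹ ^ (e + (nx-1)) := by
            rw [show d + ny = e + (nx - 1) from by omega]
        _ = (x k)⁻¹ ^ e * ((∏ i, (x k - y i)) * (x k)⁻¹ ^ (nx-1)) := by rw [pow_add]; ring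
    rw [hkey, sub_self]
  -- divisibility
  have hinv : Function.Injective (fun j : Fin nx => (x j)⁻¹) := fun i j h =>
    hxdist (inv_injective h)
  have hfac : ∀ j : Fin nx, (C (-(x j)) * (X - C (x j)⁻¹) : ℝ[X]) = 1 - C (x j) * X := by
    intro j
    rw [mul_sub, ← C_mul, neg_mul, mul_inv_cancel₀ (hx0 j), map_neg, map_neg, map_one]
    ring
  have hp_eq : p = C (∏ j, -(x j)) * ∏ j, (X - C (x j)⁻¹) := by
    rw [map_prod, ← prod_mul_distrib]
    exact (prod_congr rfl fun j _ => (hfac j)).symm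
  have hc0 : (∏ j, -(x j)) ≠ 0 := prod_ne_zero_iff.mpr fun j _ => neg_ne_zero.mpr (hx0 j)
  have hnodal_dvd : (∏ j, (X - C (x j)⁻¹) : ℝ[X]) ∣ F :=
    Fintype.prod_dvd_of_coprime (Polynomial.pairwise_coprime_X_sub_C hinv)
      (fun k => dvd_iff_isRoot.mpr (hroot k))
  have hpdvd : p ∣ F := by
    obtain ⟨g, hg⟩ := hnodal_dvd
    refine ⟨C ((∏ j, -(x j))⁻¹) * g, ?_⟩
    rw [hg, hp_eq]
    calc (∏ j, (X - C (x j)⁻¹) : ℝ[X]) * g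
        = (C (∏ j, -(x j)) * C ((∏ j, -(x j))⁻¹)) * ((∏ j, (X - C (x j)⁻¹)) * g) := by
          rw [← C_mul, mul_inv_cancel₀ hc0, map_one, one_mul]
      _ = C (∏ j, -(x j)) * (∏ j, (X - C (x j)⁻¹)) * (C ((∏ j, -(x j))⁻¹) * g) := by ring
  -- degree bounds
  have hfactor_deg : ∀ c : ℝ, (1 - C c * X : ℝ[X]).degree ≤ 1 := by
    intro c
    refine (degree_sub_le _ _).trans (max_le (degree_one_le.trans (by norm_num)) ?_)
    refine (degree_mul_le _ _).trans ?_
    rw [degree_X]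
    calc degree (C c) + 1 ≤ 0 + 1 := add_le_add_left degree_C_le 1
      _ = 1 := by norm_num
  have hq_deg : q.degree ≤ (ny : ℕ) := by
    refine (degree_prod_le _ _).trans ?_
    calc ∑ i : Fin ny, (1 - C (y i) * X : ℝ[X]).degree ≤ ∑ _i : Fin ny, (1 : WithBot ℕ) :=
          Finset.sum_le_sum fun i _ => hfactor_deg (y i)
      _ = (ny : ℕ) := by simp
  have hG_deg : G.degree ≤ ((nx - 1 : ℕ) : WithBot ℕ) := by
    refine (degree_sum_le _ _).trans ?_
    refine Finset.sup_le fun k _ => ?_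
    refine (degree_mul_le _ _).trans ?_
    calc degree (C (w k)) + degree (∏ j ∈ univ.erase k, (1 - C (x j) * X : ℝ[X]))
        ≤ 0 + ((nx - 1 : ℕ) : WithBot ℕ) := by
          refine add_le_add degree_C_le ((degree_prod_le _ _).trans ?_)
          calc ∑ j ∈ univ.erase k, (1 - C (x j) * X : ℝ[X]).degree
              ≤ ∑ _j ∈ univ.erase k, (1 : WithBot ℕ) :=
                Finset.sum_le_sum fun j _ => hfactor_deg (x j)
            _ = ((nx - 1 : ℕ) : WithBot ℕ) := by
                rw [Finset.sum_const, card_erase_of_mem (mem_univ k), card_univ,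
                  Fintype.card_fin]
                simp [nsmul_eq_mul]
      _ = ((nx - 1 : ℕ) : WithBot ℕ) := by rw [zero_add]
  have hF_deg : F.degree < ((e + nx : ℕ) : WithBot ℕ) := by
    refine lt_of_le_of_lt (degree_sub_le _ _) (max_lt ?_ ?_)
    · refine lt_of_le_of_lt ((degree_mul_le _ _).trans ?_)
        (?_ : ((d + ny : ℕ) : WithBot ℕ) < ((e + nx : ℕ) : WithBot ℕ))
      · rw [degree_X_pow]
        calc (d : WithBot ℕ) + q.degree ≤ (d : WithBot ℕ) + (ny : ℕ) :=
              add_le_add_right hq_deg _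
          _ = ((d + ny : ℕ) : WithBot ℕ) := by push_cast; rfl
      · exact_mod_cast (by omega : d + ny < e + nx)
    · refine lt_of_le_of_lt ((degree_mul_le _ _).trans ?_)
        (?_ : ((e + (nx - 1) : ℕ) : WithBot ℕ) < ((e + nx : ℕ) : WithBot ℕ))
      · rw [degree_X_pow]
        calc (e : WithBot ℕ) + G.degree ≤ (e : WithBot ℕ) + ((nx - 1 : ℕ) : WithBot ℕ) :=
              add_le_add_right hG_deg _
          _ = ((e + (nx - 1) : ℕ) : WithBot ℕ) := by push_cast; rfl
      · exact_mod_cast (by omega : e + (nx - 1) < e + nx)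
  have hp_deg : p.degree = (nx : ℕ) := by
    rw [hp_eq, degree_mul, degree_C hc0, zero_add]
    have : (∏ j, (X - C (x j)⁻¹) : ℝ[X]) = Lagrange.nodal univ fun j => (x j)⁻¹ := rfl
    rw [this, Lagrange.degree_nodal, card_univ, Fintype.card_fin]
  have hp0 : p ≠ 0 := fun h0 => by
    rw [h0, degree_zero] at hp_deg
    exact (WithBot.bot_ne_coe (a := (nx:ℕ))) hp_deg
  obtain ⟨h, hFh⟩ := hpdvd
  have hh_deg : h.degree < ((e : ℕ) : WithBot ℕ) := by
    rcases eq_or_ne h 0 with rfl | hh0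
    · rw [degree_zero]
      exact WithBot.bot_lt_coe e
    · have hdm : F.degree = (nx : ℕ) + h.degree := by rw [hFh, degree_mul, hp_deg]
      rw [hdm, show ((e + nx : ℕ) : WithBot ℕ) = (nx : ℕ) + (e : ℕ) from by
        push_cast; rw [add_comm]] at hF_deg
      exact (WithBot.add_lt_add_iff_left (by exact_mod_cast WithBot.coe_ne_bot)).mp hF_deg
  -- power series
  have hpc : PowerSeries.constantCoeff (p : PowerSeries ℝ) ≠ 0 := by
    have h1 : PowerSeries.constantCoeff (p : PowerSeries ℝ) = p.coeff 0 := by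
      rw [← PowerSeries.coeff_zero_eq_constantCoeff, Polynomial.coeff_coe]
    rw [h1, Polynomial.coeff_zero_eq_eval_zero]
    simp [hp, eval_prod]
  set T : Fin nx → PowerSeries ℝ := fun k => PowerSeries.mk fun n => x k ^ n with hTdef
  have hT : ∀ k, ((1 - C (x k) * X : ℝ[X]) : PowerSeries ℝ) * T k = 1 := by
    intro k
    have h1 : ((1 - C (x k) * X : ℝ[X]) : PowerSeries ℝ)
        = 1 - PowerSeries.C (x k) * PowerSeries.X := by push_cast; ring
    rw [h1, sub_mul, one_mul, mul_assoc]
    ext n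
    rcases n with _ | n
    · simp [hTdef]
    · simp [hTdef, PowerSeries.coeff_succ_X_mul, PowerSeries.coeff_mk, pow_succ, mul_comm]
  have hpT : ∀ k, (p : PowerSeries ℝ) * T k
      = ((∏ j ∈ univ.erase k, (1 - C (x j) * X) : ℝ[X]) : PowerSeries ℝ) := by
    intro k
    have hsplit : p = (1 - C (x k) * X) * ∏ j ∈ univ.erase k, (1 - C (x j) * X) :=
      (mul_prod_erase univ _ (mem_univ k)).symm
    rw [hsplit, Polynomial.coe_mul, mul_comm _ ((∏ j ∈ univ.erase k,
      (1 - C (x j) * X) : ℝ[X]) : PowerSeries ℝ), mul_assoc, hT k, mul_one]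
  have hGp : (G : PowerSeries ℝ)
      = (p : PowerSeries ℝ) * ∑ k, PowerSeries.C (w k) * T k := by
    rw [Finset.mul_sum]
    have hGc : (G : PowerSeries ℝ) = ∑ k, PowerSeries.C (w k) *
        ((∏ j ∈ univ.erase k, (1 - C (x j) * X) : ℝ[X]) : PowerSeries ℝ) := by
      rw [hG]
      rw [show ((↑(∑ k, C (w k) * ∏ j ∈ univ.erase k, (1 - C (x j) * X)) : ℝ[X]) :
          PowerSeries ℝ) = Polynomial.coeToPowerSeries.ringHom (R := ℝ)
            (∑ k, C (w k) * ∏ j ∈ univ.erase k, (1 - C (x j) * X)) from rfl, map_sum]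
      refine Finset.sum_congr rfl fun k _ => ?_
      rw [map_mul]
      congr 1
      exact Polynomial.coe_C (w k)
    rw [hGc]
    refine Finset.sum_congr rfl fun k _ => ?_
    rw [← hpT k]
    ring
  have hGinv : (G : PowerSeries ℝ) * ((p : PowerSeries ℝ))⁻¹
      = ∑ k, PowerSeries.C (w k) * T k := by
    rw [hGp, mul_right_comm, PowerSeries.mul_inv_cancel _ hpc, one_mul]
  have hcast : ((X ^ d * q : ℝ[X]) : PowerSeries ℝ)
      = (p : PowerSeries ℝ) * (h : PowerSeries ℝ) + ((X ^ e * G : ℝ[X]) : PowerSeries ℝ) := by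
    have h3 : (X ^ d * q : ℝ[X]) = p * h + X ^ e * G := by
      have h4 := hFh
      rw [hF] at h4
      linear_combination h4
    exact_mod_cast congrArg (fun r : ℝ[X] => (r : PowerSeries ℝ)) h3
  -- final coefficient extraction
  have hid : (PowerSeries.X : PowerSeries ℝ) ^ d * ((q : PowerSeries ℝ) * ((p : PowerSeries ℝ))⁻¹)
      = (h : PowerSeries ℝ) + (PowerSeries.X : PowerSeries ℝ) ^ e
          * ((G : PowerSeries ℝ) * ((p : PowerSeries ℝ))⁻¹) := by
    have h5 := congrArg (fun r => r * ((p : PowerSeries ℝ))⁻¹) hcast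
    simp only [Polynomial.coe_mul, Polynomial.coe_pow, Polynomial.coe_X] at h5
    calc (PowerSeries.X : PowerSeries ℝ) ^ d * ((q : PowerSeries ℝ) * ((p : PowerSeries ℝ))⁻¹)
        = (PowerSeries.X ^ d * (q : PowerSeries ℝ)) * ((p : PowerSeries ℝ))⁻¹ := by ring
      _ = ((p : PowerSeries ℝ) * (h : PowerSeries ℝ)
            + PowerSeries.X ^ e * (G : PowerSeries ℝ)) * ((p : PowerSeries ℝ))⁻¹ := h5
      _ = (h : PowerSeries ℝ) * ((p : PowerSeries ℝ) * ((p : PowerSeries ℝ))⁻¹)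
            + PowerSeries.X ^ e * ((G : PowerSeries ℝ) * ((p : PowerSeries ℝ))⁻¹) := by ring
      _ = _ := by rw [PowerSeries.mul_inv_cancel _ hpc, mul_one]
  have hco := congrArg (PowerSeries.coeff (e + m)) hid
  rw [PowerSeries.coeff_X_pow_mul', map_add] at hco
  have hcoh : PowerSeries.coeff (e + m) (h : PowerSeries ℝ) = 0 := by
    rw [Polynomial.coeff_coe]
    exact Polynomial.coeff_eq_zero_of_degree_lt
      (lt_of_lt_of_le hh_deg (by exact_mod_cast Nat.le_add_right e m))
  have hcoS : PowerSeries.coeff (e + m)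
      (PowerSeries.X ^ e * ((G : PowerSeries ℝ) * ((p : PowerSeries ℝ))⁻¹))
      = ∑ k, w k * x k ^ m := by
    rw [show e + m = m + e from add_comm e m,
      PowerSeries.coeff_X_pow_mul ((G : PowerSeries ℝ) * ((p : PowerSeries ℝ))⁻¹) e m,
      hGinv, map_sum]
    refine Finset.sum_congr rfl fun k _ => ?_
    rw [PowerSeries.coeff_C_mul, hTdef, PowerSeries.coeff_mk]
  rw [hcoh, zero_add, hcoS] at hco
  rw [hde2]
  by_cases hcase : d ≤ e + m
  · rw [if_pos hcase] at hco
    rw [show (e : ℤ) - d + m = ((e + m - d : ℕ) : ℤ) from by omega, ha (e + m - d)]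
    exact hco
  · rw [if_neg hcase] at hco
    rw [haneg _ (by omega)]
    exact hco

theorem stmt_14 (nx ny : ℕ) (x : Fin nx → ℝ) (y : Fin ny → ℝ)
    (hxdist : Function.Injective x) (hx0 : ∀ j, x j ≠ 0)
    (a : ℤ → ℝ) (haneg : ∀ n : ℤ, n < 0 → a n = 0)
    (ha : ∀ n : ℕ, a n = PowerSeries.coeff n
      (((∏ i, (1 - C (y i) * X) : ℝ[X]) : PowerSeries ℝ) *
        ((∏ j, (1 - C (x j) * X) : ℝ[X]) : PowerSeries ℝ)⁻¹))
    (w : Fin nx → ℝ)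
    (hw : ∀ j, w j = (∏ i, (X - C (y i)) : ℝ[X]).eval (x j) /
        (derivative (∏ j', (X - C (x j')) : ℝ[X])).eval (x j))
    (A1 A0 V W R : Matrix (Fin nx) (Fin nx) ℝ)
    (hA1 : ∀ i j, A1 i j = a ((ny : ℤ) + i - j))
    (hA0 : ∀ i j, A0 i j = a ((ny : ℤ) + 1 + i - j))
    (hV : ∀ i j, V i j = x j ^ (i : ℕ))
    (hW : W = Matrix.diagonal w)
    (hR : ∀ i j, R i j = if (i : ℕ) + (j : ℕ) = nx - 1 then 1 else 0) :
    A1 * R = V * W * V.transpose ∧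
      A0 * R = V * W * Matrix.diagonal x * V.transpose := by
  constructor
  · ext i j
    have hnx : 0 < nx := i.pos
    have hkm := key_lemma nx ny hnx x y hxdist hx0 a haneg ha w hw
    have hL : (A1 * R) i j = a ((ny : ℤ) + 1 - nx + (((i:ℕ) + (j:ℕ) : ℕ) : ℤ)) := by
      rw [Matrix.mul_apply]
      rw [Finset.sum_eq_single (⟨nx - 1 - (j:ℕ), by omega⟩ : Fin nx)]
      · rw [hA1, hR]
        have hj : (j : ℕ) < nx := j.isLt
        rw [if_pos (by simp only []; omega), mul_one]
        congr 1
        simp only []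
        push_cast
        omega
      · intro t _ ht
        rw [hR, if_neg (fun hc => ht (Fin.ext (by simp only []; omega))), mul_zero]
      · intro hmem
        exact absurd (mem_univ _) hmem
    have hRhs : (V * W * V.transpose) i j = ∑ k, w k * x k ^ ((i:ℕ) + (j:ℕ)) := by
      rw [hW, Matrix.mul_apply]
      simp only [Matrix.mul_diagonal, Matrix.transpose_apply, hV]
      exact Finset.sum_congr rfl fun t _ => by rw [pow_add]; ring
    rw [hL, hRhs, hkm]
  · ext i j
    have hnx : 0 < nx := i.pos
    have hkm := key_lemma nx ny hnx x y hxdist hx0 a haneg ha w hw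
    have hL : (A0 * R) i j = a ((ny : ℤ) + 1 - nx + (((i:ℕ) + (j:ℕ) + 1 : ℕ) : ℤ)) := by
      rw [Matrix.mul_apply]
      rw [Finset.sum_eq_single (⟨nx - 1 - (j:ℕ), by omega⟩ : Fin nx)]
      · rw [hA0, hR]
        have hj : (j : ℕ) < nx := j.isLt
        rw [if_pos (by simp only []; omega), mul_one]
        congr 1
        simp only []
        push_cast
        omega
      · intro t _ ht
        rw [hR, if_neg (fun hc => ht (Fin.ext (by simp only []; omega))), mul_zero]
      · intro hmem
        exact absurd (mem_univ _) hmem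
    have hRhs : (V * W * Matrix.diagonal x * V.transpose) i j
        = ∑ k, w k * x k ^ ((i:ℕ) + (j:ℕ) + 1) := by
      rw [hW, Matrix.mul_apply]
      simp only [Matrix.mul_diagonal, Matrix.transpose_apply, hV]
      exact Finset.sum_congr rfl fun t _ => by rw [pow_add, pow_add, pow_one]; ring
    rw [hL, hRhs, hkm]
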